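/- ∫₀^∞ dt/√(1 + √3·t² + t⁴) = K(½√(2 − √3)), where K is the complete elliptic integral of the first kind. -/

import Mathlib

open Real MeasureTheory Set intervalIntegral

noncomputable def cc : ℝ := (2 - Real.sqrt 3) / 4

lemma sqrt3_lt_two : Real.sqrt 3 < 2 := by
  nlinarith [Real.sq_sqrt (show (0:ℝ) ≤ 3 by norm_num), Real.sqrt_nonneg 3]

lemma one_lt_sqrt3 : 1 < Real.sqrt 3 := by
  nlinarith [Real.sq_sqrt (show (0:ℝ) ≤ 3 by norm_num), Real.sqrt_nonneg 3]

lemma cc_nonneg : 0 ≤ cc := by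
  have := sqrt3_lt_two; unfold cc; linarith

lemma cc_lt_one : cc < 1 := by
  have := one_lt_sqrt3; unfold cc; linarith

lemma denom_pos (x : ℝ) : 0 < 1 - cc * Real.sin x ^ 2 := by
  have h1 : Real.sin x ^ 2 ≤ 1 := Real.sin_sq_le_one x
  have h2 : 0 ≤ Real.sin x ^ 2 := sq_nonneg _
  nlinarith [cc_nonneg, cc_lt_one]

noncomputable def hh : ℝ → ℝ := fun s => 1 / Real.sqrt (1 - cc * Real.sin s ^ 2)

lemma hh_cont : Continuous hh := by
  apply Continuous.div continuous_const
  · exact Real.continuous_sqrt.comp (by continuity)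
  · intro x
    exact ne_of_gt (Real.sqrt_pos.2 (denom_pos x))

lemma hh_intble (a b : ℝ) : IntervalIntegrable hh volume a b :=
  hh_cont.intervalIntegrable a b

lemma doubling : (∫ θ in (0:ℝ)..(π/2), hh (2*θ)) = ∫ θ in (0:ℝ)..(π/2), hh θ := by
  have h1 : (∫ θ in (0:ℝ)..(π/2), hh (2*θ)) = (2:ℝ)⁻¹ • ∫ x in (0:ℝ)..π, hh x := by
    rw [intervalIntegral.integral_comp_mul_left hh (by norm_num : (2:ℝ) ≠ 0),
      mul_zero, show (2:ℝ) * (π/2) = π by ring]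
  have h2 : (∫ x in (0:ℝ)..π, hh x) =
      (∫ x in (0:ℝ)..(π/2), hh x) + ∫ x in (π/2)..π, hh x := by
    rw [intervalIntegral.integral_add_adjacent_intervals (hh_intble _ _) (hh_intble _ _)]
  have h3 : (∫ x in (π/2)..π, hh x) = ∫ x in (0:ℝ)..(π/2), hh x := by
    have := intervalIntegral.integral_comp_sub_left (a := (0:ℝ)) (b := π/2) hh π
    rw [show π - π/2 = π/2 by ring, show π - 0 = π by ring] at this
    rw [← this]
    apply intervalIntegral.integral_congr
    intro x _
    simp [hh, Real.sin_pi_sub]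
  rw [h1, h2, h3]
  ring_nf

lemma tan_image : Real.tan '' Ioo 0 (π/2) = Ioi (0:ℝ) := by
  ext y
  constructor
  · rintro ⟨x, ⟨hx1, hx2⟩, rfl⟩
    exact Real.tan_pos_of_pos_of_lt_pi_div_two hx1 hx2
  · intro hy
    exact ⟨Real.arctan y, ⟨by simpa using Real.arctan_strictMono hy, Real.arctan_lt_pi_div_two y⟩,
      Real.tan_arctan y⟩

lemma pointwise (θ : ℝ) (hθ : θ ∈ Ioo 0 (π/2)) :
    |1 / Real.cos θ ^ 2| * (1 / Real.sqrt (1 + Real.sqrt 3 * Real.tan θ ^ 2 + Real.tan θ ^ 4))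
      = hh (2*θ) := by
  have hcos : 0 < Real.cos θ := Real.cos_pos_of_mem_Ioo ⟨by linarith [hθ.1, Real.pi_pos], hθ.2⟩
  have hcne : Real.cos θ ≠ 0 := ne_of_gt hcos
  have hB : 0 < 1 - cc * Real.sin (2*θ) ^ 2 := denom_pos _
  have hE : 1 + Real.sqrt 3 * Real.tan θ ^ 2 + Real.tan θ ^ 4
      = (1 - cc * Real.sin (2*θ) ^ 2) * (1 / Real.cos θ ^ 2) ^ 2 := by
    rw [Real.tan_eq_sin_div_cos, Real.sin_two_mul]
    unfold cc
    field_simp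
    linear_combination (4 * Real.cos θ ^ 6 * (Real.sin θ ^ 2 + Real.cos θ ^ 2 + 1) + ((4 - 4 * Real.cos θ ^ 6) * Real.sin θ ^ 2 + 8 * Real.cos θ ^ 2 - 8 * Real.cos θ ^ 8 + (4 - 4 * Real.cos θ ^ 6) * (1 - Real.cos θ ^ 2))) *
      Real.sin_sq_add_cos_sq θ
  have hsq : Real.sqrt (1 + Real.sqrt 3 * Real.tan θ ^ 2 + Real.tan θ ^ 4)
      = Real.sqrt (1 - cc * Real.sin (2*θ) ^ 2) * (1 / Real.cos θ ^ 2) := by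
    rw [hE, Real.sqrt_mul hB.le, Real.sqrt_sq (by positivity)]
  rw [hsq, abs_of_pos (by positivity : (0:ℝ) < 1 / Real.cos θ ^ 2)]
  have hsB : Real.sqrt (1 - cc * Real.sin (2*θ) ^ 2) ≠ 0 := ne_of_gt (Real.sqrt_pos.2 hB)
  unfold hh
  field_simp

theorem integral_eq_K_sin15 :
    ∫ t in Set.Ioi (0:ℝ), 1 / Real.sqrt (1 + Real.sqrt 3 * t^2 + t^4)
      = ∫ θ in (0:ℝ)..(π/2),
          1 / Real.sqrt (1 - ((1/2) * Real.sqrt (2 - Real.sqrt 3))^2 * Real.sin θ ^ 2) := by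
  have hksq : ((1/2) * Real.sqrt (2 - Real.sqrt 3))^2 = cc := by
    rw [mul_pow, Real.sq_sqrt (by nlinarith [sqrt3_lt_two] : (0:ℝ) ≤ 2 - Real.sqrt 3)]
    unfold cc; ring
  have hRHS : (∫ θ in (0:ℝ)..(π/2),
      1 / Real.sqrt (1 - ((1/2) * Real.sqrt (2 - Real.sqrt 3))^2 * Real.sin θ ^ 2))
      = ∫ θ in (0:ℝ)..(π/2), hh θ := by
    apply intervalIntegral.integral_congr
    intro x _
    rw [hksq]; rfl
  rw [hRHS]
  -- substitution t = tan θ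
  have hderiv : ∀ x ∈ Ioo (0:ℝ) (π/2),
      HasDerivWithinAt Real.tan (1 / Real.cos x ^ 2) (Ioo 0 (π/2)) x := by
    intro x hx
    have hcos : Real.cos x ≠ 0 :=
      ne_of_gt (Real.cos_pos_of_mem_Ioo ⟨by linarith [hx.1, Real.pi_pos], hx.2⟩)
    exact (Real.hasDerivAt_tan hcos).hasDerivWithinAt
  have hinj : Set.InjOn Real.tan (Ioo 0 (π/2)) :=
    Real.injOn_tan.mono (Ioo_subset_Ioo (by linarith [Real.pi_pos]) le_rfl)
  have key := MeasureTheory.integral_image_eq_integral_abs_deriv_smul measurableSet_Ioo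
    hderiv hinj (fun t => 1 / Real.sqrt (1 + Real.sqrt 3 * t^2 + t^4))
  rw [tan_image] at key
  rw [key]
  have : (∫ x in Ioo (0:ℝ) (π/2),
      |1 / Real.cos x ^ 2| • (1 / Real.sqrt (1 + Real.sqrt 3 * Real.tan x ^2 + Real.tan x ^4)))
      = ∫ x in Ioo (0:ℝ) (π/2), hh (2*x) := by
    apply MeasureTheory.setIntegral_congr_fun measurableSet_Ioo
    intro x hx
    simpa [smul_eq_mul] using pointwise x hx
  rw [this]
  rw [← MeasureTheory.integral_Ioc_eq_integral_Ioo,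
    ← intervalIntegral.integral_of_le (by positivity : (0:ℝ) ≤ π/2)]
  exact doubling
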